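/- arXiv:1006.3436 — 3 statements merged into one kernel-verified Lean document; each statement's English description precedes it below -/
import Mathlib

section
/- Let F_N^{(1)} be the exponential series f_n = λ^n (λ ≠ 0) and L ≤ N/2. A nonzero f.d.d. time series F^{(2)}_N is left-separable from F^{(1)}_N if and only if f^{(2)}_n = Σ_{k=1}^{L-1} c_k μ_k^n where μ_k = exp(2πik/L)/\overline{λ} and the c_k ∈ ℂ are not all zero. -/
open Polynomial Finset Real

/-- Trajectory space: span of lagged vectors of the first `N` values of `f`. -/
noncomputable def trajSpace (f : ℕ → ℂ) (N L : ℕ) : Submodule ℂ (Fin L → ℂ) :=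
  Submodule.span ℂ {v : Fin L → ℂ | ∃ i : ℕ, i + L ≤ N ∧ v = fun j : Fin L => f (i + (j : ℕ))}

/-- The Hermitian inner product on `Fin L → ℂ`. -/
noncomputable def hinner {L : ℕ} (u v : Fin L → ℂ) : ℂ :=
  ∑ i, (starRingEnd ℂ) (u i) * v i

lemma botlt (n : ℕ) : (⊥ : WithBot ℕ) < (n : WithBot ℕ) :=
  bot_lt_iff_ne_bot.mpr (by simp)

lemma sum_geom_weighted (t : ℂ) (L : ℕ) :
    (t - 1) * ∑ j ∈ range L, (j : ℂ) * t ^ j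
      = L * t ^ L - t * ∑ j ∈ range L, t ^ j := by
  induction L with
  | zero => simp
  | succ n ih =>
    rw [sum_range_succ, sum_range_succ]
    push_cast
    linear_combination ih

lemma degree_comp_X_add_C_lt (p : Polynomial ℂ) (a : ℂ) (n : ℕ)
    (h : p.degree < (n : ℕ)) : (p.comp (X + C a)).degree < (n : ℕ) := by
  rcases eq_or_ne p 0 with rfl | hp
  · simpa using botlt n
  · have hnd : (p.comp (X + C a)).natDegree = p.natDegree := by
      rw [natDegree_comp, natDegree_X_add_C, mul_one]
    calc (p.comp (X + C a)).degree ≤ ((p.comp (X + C a)).natDegree : WithBot ℕ) :=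
          degree_le_natDegree
      _ = (p.natDegree : WithBot ℕ) := by rw [hnd]
      _ = p.degree := (degree_eq_natDegree hp).symm
      _ < (n : ℕ) := h

lemma leadingCoeff_comp_X_add_C (p : Polynomial ℂ) (a : ℂ) :
    (p.comp (X + C a)).leadingCoeff = p.leadingCoeff := by
  rw [leadingCoeff_comp (by rw [natDegree_X_add_C]; exact one_ne_zero)]
  simp [leadingCoeff_X_add_C]

lemma degree_comp_sub_lt (p : Polynomial ℂ) (n : ℕ) (h : p.degree < ((n + 1 : ℕ) : WithBot ℕ)) :
    (p.comp (X + C 1) - p).degree < (n : ℕ) := by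
  rcases eq_or_ne p 0 with rfl | hp
  · simpa using botlt n
  rcases eq_or_ne p.natDegree 0 with h0 | h0
  · obtain ⟨c, rfl⟩ := natDegree_eq_zero.mp h0
    simpa using botlt n
  · have hcomp_ne : p.comp (X + C 1) ≠ 0 := by
      intro hc
      have hl := leadingCoeff_comp_X_add_C p 1
      rw [hc, leadingCoeff_zero] at hl
      exact hp (leadingCoeff_eq_zero.mp hl.symm)
    have hdeg : (p.comp (X + C 1)).degree = p.degree := by
      rw [degree_eq_natDegree hp, degree_eq_natDegree hcomp_ne,
        natDegree_comp, natDegree_X_add_C, mul_one]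
    have hlt : (p.comp (X + C 1) - p).degree < p.degree :=
      hdeg ▸ degree_sub_lt hdeg hcomp_ne (leadingCoeff_comp_X_add_C p 1)
    have hle : p.degree ≤ ((n + 1 : ℕ) : WithBot ℕ) → p.natDegree ≤ n + 1 := fun h' =>
      natDegree_le_iff_degree_le.mpr h'
    have hnat : p.natDegree ≤ n := by
      have := (degree_eq_natDegree hp) ▸ h
      exact_mod_cast Nat.lt_succ_iff.mp (by exact_mod_cast this)
    calc (p.comp (X + C 1) - p).degree < p.degree := hlt
      _ = (p.natDegree : WithBot ℕ) := degree_eq_natDegree hp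
      _ ≤ (n : WithBot ℕ) := by exact_mod_cast hnat

lemma degree_C_mul_le (a : ℂ) (p : Polynomial ℂ) : (C a * p).degree ≤ p.degree := by
  calc (C a * p).degree ≤ (C a).degree + p.degree := Polynomial.degree_mul_le _ _
    _ ≤ 0 + p.degree := add_le_add Polynomial.degree_C_le le_rfl
    _ = p.degree := zero_add _

lemma exp_poly_vanish : ∀ (D m : ℕ) (lam : Fin m → ℂ) (Q : Fin m → Polynomial ℂ)
    (d : Fin m → ℕ), Function.Injective lam → (∀ k, lam k ≠ 0) →
    (∑ k, d k = D) → (∀ k, (Q k).degree < ((d k : ℕ) : WithBot ℕ)) →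
    (∀ n : ℕ, n < D → ∑ k, (Q k).eval (n : ℂ) * lam k ^ n = 0) →
    ∀ k, Q k = 0 := by
  intro D
  induction D with
  | zero =>
    intro m lam Q d hinj hne hsum hdeg hvan k
    have hdk : d k = 0 := by
      have := Finset.sum_eq_zero_iff.mp hsum
      exact this k (Finset.mem_univ k)
    by_contra hQ
    have h0 : (0 : WithBot ℕ) ≤ (Q k).degree := zero_le_degree_iff.mpr hQ
    have := hdeg k
    rw [hdk] at this
    exact absurd (lt_of_le_of_lt h0 this) (by simp)
  | succ D ih =>
    intro m lam Q d hinj hne hsum hdeg hvan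
    have hex : ∃ k, d k ≠ 0 := by
      by_contra hc
      push_neg at hc
      simp [hc] at hsum
    obtain ⟨m₀, hm₀⟩ := hex
    have hm₀pos : 1 ≤ d m₀ := Nat.one_le_iff_ne_zero.mpr hm₀
    set R : Fin m → Polynomial ℂ :=
      fun k => C (lam k) * (Q k).comp (X + C 1) - C (lam m₀) * Q k with hR
    set d' : Fin m → ℕ := Function.update d m₀ (d m₀ - 1) with hd'
    have hsum' : ∑ k, d' k = D := by
      have h1 : ∑ k, d' k = d m₀ - 1 + ∑ k ∈ Finset.univ.erase m₀, d k := by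
        rw [hd', ← Finset.add_sum_erase _ _ (Finset.mem_univ m₀)]
        simp only [Function.update_self]
        congr 1
        exact Finset.sum_congr rfl fun k hk =>
          Function.update_of_ne (Finset.ne_of_mem_erase hk) _ _
      have h2 : ∑ k, d k = d m₀ + ∑ k ∈ Finset.univ.erase m₀, d k :=
        (Finset.add_sum_erase _ _ (Finset.mem_univ m₀)).symm
      omega
    have hdeg' : ∀ k, (R k).degree < ((d' k : ℕ) : WithBot ℕ) := by
      intro k
      rcases eq_or_ne k m₀ with rfl | hk
      · have hfact : R k = C (lam k) * ((Q k).comp (X + C 1) - Q k) := by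
          rw [hR]; ring
        rw [hfact, hd', Function.update_self]
        calc (C (lam k) * ((Q k).comp (X + C 1) - Q k)).degree
            ≤ ((Q k).comp (X + C 1) - Q k).degree := degree_C_mul_le _ _
          _ < ((d k - 1 : ℕ) : WithBot ℕ) := by
              apply degree_comp_sub_lt
              have : d k - 1 + 1 = d k := Nat.succ_pred_eq_of_pos hm₀pos
              rw [this]
              exact hdeg k
      · have h1 : (C (lam k) * (Q k).comp (X + C 1)).degree < ((d k : ℕ) : WithBot ℕ) :=
          lt_of_le_of_lt (degree_C_mul_le _ _) (degree_comp_X_add_C_lt _ _ _ (hdeg k))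
        have h2 : (C (lam m₀) * Q k).degree < ((d k : ℕ) : WithBot ℕ) :=
          lt_of_le_of_lt (degree_C_mul_le _ _) (hdeg k)
        rw [hd', Function.update_of_ne hk]
        exact lt_of_le_of_lt (degree_sub_le _ _) (max_lt h1 h2)
    have hvan' : ∀ n : ℕ, n < D → ∑ k, (R k).eval (n : ℂ) * lam k ^ n = 0 := by
      intro n hn
      have hterm : ∀ k, (R k).eval (n : ℂ) * lam k ^ n =
          (Q k).eval (((n+1 : ℕ) : ℂ)) * lam k ^ (n+1)
          - lam m₀ * ((Q k).eval (n : ℂ) * lam k ^ n) := by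
        intro k
        simp only [hR, eval_sub, eval_mul, eval_C, eval_comp, eval_add, eval_X, eval_one]
        push_cast
        ring
      rw [Finset.sum_congr rfl (fun k _ => hterm k), Finset.sum_sub_distrib, ← Finset.mul_sum,
        hvan (n+1) (by omega), hvan n (by omega)]
      ring
    have hRzero : ∀ k, R k = 0 := ih m lam R d' hinj hne hsum' hdeg' hvan'
    have hQne : ∀ k, k ≠ m₀ → Q k = 0 := by
      intro k hk
      by_contra hQ
      have heq : C (lam k) * (Q k).comp (X + C 1) = C (lam m₀) * Q k :=
        sub_eq_zero.mp (hRzero k)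
      have hlc := congrArg leadingCoeff heq
      rw [leadingCoeff_mul, leadingCoeff_mul, leadingCoeff_C, leadingCoeff_C,
        leadingCoeff_comp_X_add_C] at hlc
      have : lam k = lam m₀ :=
        mul_right_cancel₀ (leadingCoeff_ne_zero.mpr hQ) hlc
      exact hk (hinj this)
    have hcomp : (Q m₀).comp (X + C 1) = Q m₀ := by
      have heq : C (lam m₀) * ((Q m₀).comp (X + C 1) - Q m₀) = 0 := by
        have := hRzero m₀
        rw [hR] at this
        rw [mul_sub]
        exact this
      rcases mul_eq_zero.mp heq with h | h
      · exact absurd (C_eq_zero.mp h) (hne m₀)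
      · exact sub_eq_zero.mp h
    have heval0 : (Q m₀).eval 0 = 0 := by
      have h0 := hvan 0 (Nat.succ_pos D)
      rw [Finset.sum_eq_single m₀ (fun k _ hk => by rw [hQne k hk]; simp)
        (fun h => absurd (Finset.mem_univ m₀) h)] at h0
      simpa using h0
    have hevaln : ∀ n : ℕ, (Q m₀).eval (n : ℂ) = 0 := by
      intro n
      induction n with
      | zero => simpa using heval0
      | succ n ihn =>
        have := congrArg (fun p => p.eval (n : ℂ)) hcomp
        simp only [eval_comp, eval_add, eval_X, eval_C] at this
        push_cast
        rw [this]
        exact ihn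
    have hQm₀ : Q m₀ = 0 := by
      apply Polynomial.eq_zero_of_infinite_isRoot
      apply Set.infinite_of_injective_forall_mem (f := fun n : ℕ => (n : ℂ))
      · exact Nat.cast_injective
      · intro n
        exact hevaln n
    intro k
    rcases eq_or_ne k m₀ with rfl | hk
    · exact hQm₀
    · exact hQne k hk

lemma const_of_shift_rel (L : ℕ) (t : ℂ) (hS0 : ∑ j ∈ range L, t ^ j = 0)
    (hS1 : ∑ j ∈ range L, (j : ℂ) * t ^ j ≠ 0) :
    ∀ (n : ℕ) (P : Polynomial ℂ), P.natDegree ≤ n →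
      (∑ j ∈ range L, C (t ^ j) * P.comp (X + C (j : ℂ)) = 0) → P.natDegree = 0 := by
  intro n
  induction n with
  | zero => intro P h _; exact Nat.le_zero.mp h
  | succ n ihn =>
    intro P hP H
    have hd : ∑ j ∈ range L, C (t ^ j) * P.derivative.comp (X + C (j : ℂ)) = 0 := by
      have h1 := congrArg Polynomial.derivative H
      rw [map_sum] at h1
      simp only [derivative_C_mul, derivative_comp, derivative_add, derivative_X,
        derivative_C, add_zero, one_mul, map_zero] at h1
      exact h1
    have hdn : P.derivative.natDegree ≤ n := by
      have := P.natDegree_derivative_le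
      omega
    have hd0 : P.derivative.natDegree = 0 := ihn P.derivative hdn hd
    rcases eq_or_ne P.derivative 0 with h0 | h0
    · exact natDegree_eq_zero_of_derivative_eq_zero h0
    · exfalso
      -- P has natDegree ≤ 1
      have hle1 : P.natDegree ≤ 1 := by
        rw [natDegree_le_iff_coeff_eq_zero]
        intro N hN
        have h2 : P.derivative.coeff (N - 1) = 0 :=
          coeff_eq_zero_of_natDegree_lt (by omega)
        rw [coeff_derivative] at h2
        have hc : P.coeff (N - 1 + 1) * ((N - 1 : ℕ) + 1 : ℂ) = 0 := h2
        have hN1 : (N - 1) + 1 = N := by omega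
        rcases mul_eq_zero.mp hc with h3 | h3
        · rwa [hN1] at h3
        · exfalso
          exact Nat.cast_add_one_ne_zero (N - 1) h3
      have hPform : P = C (P.coeff 1) * X + C (P.coeff 0) :=
        eq_X_add_C_of_natDegree_le_one hle1
      have hb : P.coeff 1 ≠ 0 := by
        intro hb0
        apply h0
        rw [hPform, derivative_add, derivative_C, derivative_C_mul_X, hb0, map_zero, add_zero]
      have hev := congrArg (Polynomial.eval (0 : ℂ)) H
      rw [eval_finset_sum] at hev
      simp only [eval_mul, eval_C, eval_comp, eval_add, eval_X, zero_add, eval_zero] at hev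
      have hev2 : ∑ j ∈ range L, (P.coeff 1 * ((j : ℂ) * t ^ j) + P.coeff 0 * t ^ j) = 0 := by
        rw [← hev]
        apply Finset.sum_congr rfl
        intro j _
        have hej : Polynomial.eval (j : ℂ) P = P.coeff 1 * j + P.coeff 0 := by
          conv_lhs => rw [hPform]
          simp
        rw [hej]
        ring
      rw [Finset.sum_add_distrib, ← Finset.mul_sum, ← Finset.mul_sum, hS0, mul_zero,
        add_zero] at hev2
      exact hS1 (by rcases mul_eq_zero.mp hev2 with h | h; exact absurd h hb; exact h)

lemma orth_span {L : ℕ} (S T : Set (Fin L → ℂ))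
    (h : ∀ u ∈ S, ∀ v ∈ T, hinner u v = 0) :
    ∀ u ∈ Submodule.span ℂ S, ∀ v ∈ Submodule.span ℂ T, hinner u v = 0 := by
  have hfix : ∀ u ∈ S, ∀ v ∈ Submodule.span ℂ T, hinner u v = 0 := by
    intro u hu v hv
    induction hv using Submodule.span_induction with
    | mem x hx => exact h u hu x hx
    | zero => simp [hinner]
    | add x y hx hy ihx ihy => simp only [hinner, Pi.add_apply, mul_add,
        Finset.sum_add_distrib] at *; rw [ihx, ihy, add_zero]
    | smul a x hx ihx =>
        have : hinner u (a • x) = a * hinner u x := by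
          simp [hinner, Finset.mul_sum]; apply Finset.sum_congr rfl; intros; ring
        rw [this, ihx, mul_zero]
  intro u hu v hv
  induction hu using Submodule.span_induction with
  | mem x hx => exact hfix x hx v hv
  | zero => simp [hinner]
  | add x y hx hy ihx ihy => simp only [hinner, Pi.add_apply, map_add, add_mul,
      Finset.sum_add_distrib] at *; rw [ihx, ihy, add_zero]
  | smul a x hx ihx =>
      have : hinner (a • x) v = (starRingEnd ℂ) a * hinner x v := by
        simp [hinner, Finset.mul_sum]; apply Finset.sum_congr rfl; intros; ring
      rw [this, ihx, mul_zero]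

lemma exp_pow (L k : ℕ) :
    Complex.exp (2 * π * Complex.I / L) ^ k = Complex.exp (2 * π * Complex.I * k / L) := by
  rw [← Complex.exp_nat_mul]
  congr 1
  ring

lemma exp_pow_L (L k : ℕ) (hL0 : L ≠ 0) :
    Complex.exp (2 * π * Complex.I * k / L) ^ L = 1 := by
  rw [← exp_pow, ← pow_mul, mul_comm k L, pow_mul,
    ((Complex.isPrimitiveRoot_exp L hL0).pow_eq_one), one_pow]

lemma exp_ne_one (L k : ℕ) (hL0 : L ≠ 0) (hk1 : 0 < k) (hk2 : k < L) :
    Complex.exp (2 * π * Complex.I * k / L) ≠ 1 := by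
  rw [← exp_pow]
  intro h
  have := ((Complex.isPrimitiveRoot_exp L hL0).pow_eq_one_iff_dvd k).mp h
  have := Nat.le_of_dvd hk1 this
  omega

lemma geom_exp_sum_zero (L k : ℕ) (hL0 : L ≠ 0) (hk1 : 0 < k) (hk2 : k < L) :
    ∑ j ∈ range L, Complex.exp (2 * π * Complex.I * k / L) ^ j = 0 := by
  rw [geom_sum_eq (exp_ne_one L k hL0 hk1 hk2), exp_pow_L L k hL0, sub_self, zero_div]

/-- A nonzero series of finite difference dimension is left-separable from the
exponential series `f₁ n = λⁿ` (`λ ≠ 0`, `L ≤ N/2`) iff it is a combination of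
the exponentials `μₖⁿ` with `μₖ = exp(2πik/L)/conj λ`, `0 < k < L`. -/
theorem left_separable_from_exponential_iff
    (N L : ℕ) (hL : 1 < L) (hLN : 2 * L ≤ N)
    (lam₀ : ℂ) (hlam₀ : lam₀ ≠ 0) (f₁ : ℕ → ℂ) (hf₁ : ∀ n, f₁ n = lam₀ ^ n)
    (f₂ : ℕ → ℂ) (m : ℕ) (hm : 0 < m) (lam : Fin m → ℂ) (P : Fin m → Polynomial ℂ)
    (hinj : Function.Injective lam) (hne : ∀ k, lam k ≠ 0) (hP : ∀ k, P k ≠ 0)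
    (hf₂ : ∀ n : ℕ, f₂ n = ∑ k, (P k).eval (n : ℂ) * lam k ^ n)
    (hdN : 2 * (∑ k, ((P k).natDegree + 1)) ≤ N) :
    (∀ u ∈ trajSpace f₁ N L, ∀ v ∈ trajSpace f₂ N L, hinner u v = 0) ↔
      ∃ c₂ : ℕ → ℂ, (∃ k, 0 < k ∧ k < L ∧ c₂ k ≠ 0) ∧
        ∀ n : ℕ, f₂ n = ∑ k ∈ Finset.Ico 1 L,
          c₂ k * (Complex.exp (2 * π * Complex.I * k / L) / (starRingEnd ℂ) lam₀) ^ n := by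
  constructor
  · intro hOrth
    have hL0 : L ≠ 0 := by omega
    have hconj : (starRingEnd ℂ) lam₀ ≠ 0 := by simpa using hlam₀
    set D : ℕ := ∑ k, ((P k).natDegree + 1) with hD
    -- Step 1 : orthogonality at generators
    have hg : ∀ i : ℕ, i + L ≤ N →
        ∑ j ∈ range L, ((starRingEnd ℂ) lam₀) ^ j * f₂ (i + j) = 0 := by
      intro i hi
      have hu : (fun j : Fin L => f₁ (0 + (j : ℕ))) ∈ trajSpace f₁ N L :=
        Submodule.subset_span ⟨0, by omega, rfl⟩
      have hv : (fun j : Fin L => f₂ (i + (j : ℕ))) ∈ trajSpace f₂ N L :=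
        Submodule.subset_span ⟨i, hi, rfl⟩
      have h0 := hOrth _ hu _ hv
      unfold hinner at h0
      rw [Fin.sum_univ_eq_sum_range (fun j => (starRingEnd ℂ) (f₁ (0 + j)) * f₂ (i + j))] at h0
      rw [← h0]
      apply Finset.sum_congr rfl
      intro j _
      rw [hf₁, zero_add, map_pow]
    set t : Fin m → ℂ := fun k => (starRingEnd ℂ) lam₀ * lam k with ht
    set Q : Fin m → Polynomial ℂ :=
      fun k => ∑ j ∈ range L, C (t k ^ j) * (P k).comp (X + C (j : ℂ)) with hQ
    -- Step 2 : evaluation of Q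
    have hQeval : ∀ (k : Fin m) (x : ℂ),
        (Q k).eval x = ∑ j ∈ range L, t k ^ j * (P k).eval (x + j) := by
      intro k x
      rw [hQ, eval_finset_sum]
      apply Finset.sum_congr rfl
      intro j _
      simp [eval_comp]
    have hQg : ∀ i : ℕ, ∑ k, (Q k).eval (i : ℂ) * lam k ^ i
        = ∑ j ∈ range L, ((starRingEnd ℂ) lam₀) ^ j * f₂ (i + j) := by
      intro i
      have h1 : ∀ k : Fin m, (Q k).eval (i : ℂ) * lam k ^ i
          = ∑ j ∈ range L, ((starRingEnd ℂ) lam₀) ^ j *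
              ((P k).eval (((i + j : ℕ) : ℂ)) * lam k ^ (i + j)) := by
        intro k
        rw [hQeval, Finset.sum_mul]
        apply Finset.sum_congr rfl
        intro j _
        rw [ht]
        push_cast
        rw [mul_pow, pow_add]
        ring
      rw [Finset.sum_congr rfl (fun k _ => h1 k), Finset.sum_comm]
      apply Finset.sum_congr rfl
      intro j _
      rw [hf₂ (i + j), Finset.mul_sum]
    -- Step 3 : all Q k vanish
    have hvan : ∀ n : ℕ, n < D → ∑ k, (Q k).eval (n : ℂ) * lam k ^ n = 0 := by
      intro n hn
      rw [hQg n]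
      exact hg n (by omega)
    have hdeg : ∀ k, (Q k).degree < ((((P k).natDegree + 1 : ℕ)) : WithBot ℕ) := by
      intro k
      rw [hQ]
      apply lt_of_le_of_lt (degree_sum_le _ _)
      rw [Finset.sup_lt_iff (botlt _)]
      intro j _
      refine lt_of_le_of_lt (degree_C_mul_le _ _) (degree_comp_X_add_C_lt _ _ _ ?_)
      exact lt_of_le_of_lt degree_le_natDegree (by exact_mod_cast Nat.lt_succ_self _)
    have hQzero : ∀ k, Q k = 0 :=
      exp_poly_vanish D m lam Q (fun k => (P k).natDegree + 1) hinj hne hD.symm hdeg hvan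
    -- Step 4 : geometric sums
    have hS0 : ∀ k, ∑ j ∈ range L, t k ^ j = 0 := by
      intro k
      have h1 := congrArg (fun p => p.coeff ((P k).natDegree)) (hQzero k)
      simp only [hQ, finset_sum_coeff, coeff_C_mul, coeff_zero] at h1
      have hcoeff : ∀ j ∈ range L,
          t k ^ j * ((P k).comp (X + C (j : ℂ))).coeff ((P k).natDegree)
          = t k ^ j * (P k).leadingCoeff := by
        intro j _
        congr 1
        have hnd : ((P k).comp (X + C (j : ℂ))).natDegree = (P k).natDegree := by
          rw [natDegree_comp, natDegree_X_add_C, mul_one]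
        rw [← hnd, coeff_natDegree, leadingCoeff_comp_X_add_C]
      rw [Finset.sum_congr rfl hcoeff, ← Finset.sum_mul] at h1
      rcases mul_eq_zero.mp h1 with h | h
      · exact h
      · exact absurd h (leadingCoeff_ne_zero.mpr (hP k))
    have htne1 : ∀ k, t k ≠ 1 := by
      intro k hk1
      have := hS0 k
      rw [hk1] at this
      simp only [one_pow, Finset.sum_const, Finset.card_range, nsmul_eq_mul, mul_one] at this
      exact hL0 (by exact_mod_cast this)
    have htL : ∀ k, t k ^ L = 1 := by
      intro k
      have := hS0 k
      rw [geom_sum_eq (htne1 k)] at this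
      rcases div_eq_zero_iff.mp this with h | h
      · exact sub_eq_zero.mp (by linear_combination h)
      · exact absurd (sub_eq_zero.mp (by linear_combination h)) (htne1 k)
    have hS1 : ∀ k, ∑ j ∈ range L, (j : ℂ) * t k ^ j ≠ 0 := by
      intro k h
      have hw := sum_geom_weighted (t k) L
      rw [h, mul_zero, hS0 k, mul_zero, htL k, mul_one, sub_zero] at hw
      exact hL0 (by exact_mod_cast hw.symm)
    -- Step 5 : P k constant
    have hdeg0 : ∀ k, (P k).natDegree = 0 := by
      intro k
      exact const_of_shift_rel L (t k) (hS0 k) (hS1 k) ((P k).natDegree) (P k) le_rfl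
        (hQzero k)
    have hPC : ∀ k, P k = C ((P k).coeff 0) := fun k => eq_C_of_natDegree_eq_zero (hdeg0 k)
    have hc0 : ∀ k, (P k).coeff 0 ≠ 0 := by
      intro k h
      exact hP k (by rw [hPC k, h, map_zero])
    -- Step 6 : roots of unity
    have hκ : ∀ k : Fin m, ∃ i : ℕ, (0 < i ∧ i < L) ∧
        lam k = Complex.exp (2 * π * Complex.I * i / L) / (starRingEnd ℂ) lam₀ := by
      intro k
      haveI : NeZero L := ⟨hL0⟩
      obtain ⟨i, hiL, hωi⟩ :=
        (Complex.isPrimitiveRoot_exp L hL0).eq_pow_of_pow_eq_one (htL k)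
      have hti : t k = Complex.exp (2 * π * Complex.I * i / L) := by
        rw [← exp_pow]; exact hωi.symm
      refine ⟨i, ⟨?_, hiL⟩, ?_⟩
      · rcases Nat.eq_zero_or_pos i with rfl | h
        · exact absurd (by simpa using hti) (htne1 k)
        · exact h
      · rw [← hti, ht]
        field_simp
    choose κ hκ1 hκ2 using hκ
    classical
    refine ⟨fun k' => ∑ k ∈ Finset.univ.filter (fun k => κ k = k'), (P k).coeff 0,
      ⟨κ ⟨0, hm⟩, (hκ1 ⟨0, hm⟩).1, (hκ1 ⟨0, hm⟩).2, ?_⟩, ?_⟩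
    · have hfib : Finset.univ.filter (fun k => κ k = κ ⟨0, hm⟩) = {⟨0, hm⟩} := by
        ext k
        simp only [Finset.mem_filter, Finset.mem_univ, true_and, Finset.mem_singleton]
        constructor
        · intro hkk
          apply hinj
          rw [hκ2 k, hκ2 ⟨0, hm⟩, hkk]
        · rintro rfl; rfl
      simp only [hfib, Finset.sum_singleton]
      exact hc0 _
    · intro n
      rw [hf₂ n]
      have h1 : ∀ k : Fin m, (P k).eval (n : ℂ) * lam k ^ n
          = (P k).coeff 0 *
            (Complex.exp (2 * π * Complex.I * (κ k) / L) / (starRingEnd ℂ) lam₀) ^ n := by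
        intro k
        rw [hκ2 k]
        congr 1
        conv_lhs => rw [hPC k]
        rw [eval_C]
      rw [Finset.sum_congr rfl (fun k _ => h1 k),
        ← Finset.sum_fiberwise_of_maps_to
          (fun k _ => Finset.mem_Ico.mpr ⟨(hκ1 k).1, (hκ1 k).2⟩)
          (fun k => (P k).coeff 0 *
            (Complex.exp (2 * π * Complex.I * (κ k) / L) / (starRingEnd ℂ) lam₀) ^ n)]
      apply Finset.sum_congr rfl
      intro k' _
      rw [Finset.sum_mul]
      apply Finset.sum_congr rfl
      intro k hk
      have hkk' : κ k = k' := (Finset.mem_filter.mp hk).2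
      rw [hkk']
  · rintro ⟨c₂, -, hf⟩
    apply orth_span
    rintro u ⟨i, hi, rfl⟩ v ⟨i', hi', rfl⟩
    have hconj : (starRingEnd ℂ) lam₀ ≠ 0 := by
      simpa using hlam₀
    have hL0 : L ≠ 0 := by omega
    unfold hinner
    rw [Fin.sum_univ_eq_sum_range (fun j => (starRingEnd ℂ) (f₁ (i + j)) * f₂ (i' + j))]
    have hterm : ∀ j ∈ range L, (starRingEnd ℂ) (f₁ (i + j)) * f₂ (i' + j) =
        ∑ k ∈ Finset.Ico 1 L, ((starRingEnd ℂ) lam₀ ^ i * c₂ k *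
          (Complex.exp (2 * π * Complex.I * k / L) / (starRingEnd ℂ) lam₀) ^ i') *
          Complex.exp (2 * π * Complex.I * k / L) ^ j := by
      intro j _
      rw [hf₁, hf, Finset.mul_sum]
      apply Finset.sum_congr rfl
      intro k _
      have hz : (starRingEnd ℂ) lam₀ *
          (Complex.exp (2 * π * Complex.I * k / L) / (starRingEnd ℂ) lam₀) =
          Complex.exp (2 * π * Complex.I * k / L) := mul_div_cancel₀ _ hconj
      calc (starRingEnd ℂ) (lam₀ ^ (i + j)) *
            (c₂ k * (Complex.exp (2 * π * Complex.I * k / L) / (starRingEnd ℂ) lam₀) ^ (i' + j))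
          = ((starRingEnd ℂ) lam₀ ^ i * c₂ k *
              (Complex.exp (2 * π * Complex.I * k / L) / (starRingEnd ℂ) lam₀) ^ i') *
            ((starRingEnd ℂ) lam₀ *
              (Complex.exp (2 * π * Complex.I * k / L) / (starRingEnd ℂ) lam₀)) ^ j := by
            rw [map_pow, pow_add, pow_add, mul_pow]
            ring
        _ = _ := by rw [hz]
    rw [Finset.sum_congr rfl hterm, Finset.sum_comm]
    apply Finset.sum_eq_zero
    intro k hk
    rw [← Finset.mul_sum, geom_exp_sum_zero L k hL0 (by exact (Finset.mem_Ico.mp hk).1)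
      (Finset.mem_Ico.mp hk).2, mul_zero]
end

section
/- Let w : [−π, π] → ℝ≥0 be an integrable weight on the unit circle that is not a.e. zero, and define the inner product ⟨p, q⟩_w = (1/2π)∫ p(e^{iθ})\overline{q(e^{iθ})} w(e^{iθ}) dθ on complex polynomials. If Φ_n is a polynomial of degree n orthogonal to all polynomials of degree < n and with ‖Φ_n‖²_w ≠ 0, then every root z_0 of Φ_n satisfies |z_0| < 1. -/
open Polynomial Real MeasureTheory

/-- The inner product on complex polynomials induced by an integrable weight `w`
on the unit circle. -/
noncomputable def circleInner (w : ℝ → ℝ) (p q : Polynomial ℂ) : ℂ :=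
  (1 / (2 * π)) * ∫ θ in (-π)..π,
    p.eval (Complex.exp (θ * Complex.I)) *
      (starRingEnd ℂ) (q.eval (Complex.exp (θ * Complex.I))) * (w θ : ℂ)

namespace CircleInnerAux

variable {w : ℝ → ℝ}

lemma integrable (hwint : IntervalIntegrable w volume (-π) π) (p q : Polynomial ℂ) :
    IntervalIntegrable (fun θ => p.eval (Complex.exp (θ * Complex.I)) *
      (starRingEnd ℂ) (q.eval (Complex.exp (θ * Complex.I))) * (w θ : ℂ)) volume (-π) π := by
  have hC : IntervalIntegrable (fun θ => (w θ : ℂ)) volume (-π) π :=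
    ⟨hwint.1.ofReal, hwint.2.ofReal⟩
  have hcont : ContinuousOn (fun θ : ℝ => p.eval (Complex.exp (θ * Complex.I)) *
      (starRingEnd ℂ) (q.eval (Complex.exp (θ * Complex.I)))) (Set.uIcc (-π) π) := by
    apply Continuous.continuousOn
    have he : Continuous fun θ : ℝ => Complex.exp (θ * Complex.I) := by
      apply Complex.continuous_exp.comp; continuity
    exact ((p.continuous).comp he).mul (Complex.continuous_conj.comp ((q.continuous).comp he))
  exact hC.continuousOn_mul hcont

lemma add_left (hwint : IntervalIntegrable w volume (-π) π) (p₁ p₂ q : Polynomial ℂ) :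
    circleInner w (p₁ + p₂) q = circleInner w p₁ q + circleInner w p₂ q := by
  unfold circleInner
  rw [← mul_add, ← intervalIntegral.integral_add (integrable hwint p₁ q) (integrable hwint p₂ q)]
  congr 1
  apply intervalIntegral.integral_congr
  intro θ _
  simp [add_mul]

lemma const_mul_left (c : ℂ) (p q : Polynomial ℂ) :
    circleInner w (C c * p) q = c * circleInner w p q := by
  unfold circleInner
  have h : (∫ θ in (-π)..π, (C c * p).eval (Complex.exp (θ * Complex.I)) *
      (starRingEnd ℂ) (q.eval (Complex.exp (θ * Complex.I))) * (w θ : ℂ)) =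
      ∫ θ in (-π)..π, c * (p.eval (Complex.exp (θ * Complex.I)) *
      (starRingEnd ℂ) (q.eval (Complex.exp (θ * Complex.I))) * (w θ : ℂ)) := by
    apply intervalIntegral.integral_congr
    intro θ _
    simp
    ring
  rw [h, intervalIntegral.integral_const_mul]
  ring

lemma conj_symm (p q : Polynomial ℂ) :
    circleInner w q p = (starRingEnd ℂ) (circleInner w p q) := by
  unfold circleInner
  rw [map_mul]
  have h1 : (starRingEnd ℂ) (1 / (2 * (π:ℂ))) = 1 / (2 * (π:ℂ)) := by
    simp [← Complex.ofReal_ofNat, ← Complex.ofReal_mul, ← Complex.ofReal_one,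
      ← Complex.ofReal_div, Complex.conj_ofReal]
  rw [h1]
  congr 1
  have key : ∀ (f : ℝ → ℂ) (a b : ℝ), ∫ θ in a..b, (starRingEnd ℂ) (f θ) =
      (starRingEnd ℂ) (∫ θ in a..b, f θ) := by
    intro f a b
    simp [intervalIntegral, ← integral_conj]
  rw [← key]
  apply intervalIntegral.integral_congr
  intro θ _
  simp only [map_mul, Complex.conj_conj, Complex.conj_ofReal]
  ring

lemma add_right (hwint : IntervalIntegrable w volume (-π) π) (p q₁ q₂ : Polynomial ℂ) :
    circleInner w p (q₁ + q₂) = circleInner w p q₁ + circleInner w p q₂ := by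
  rw [conj_symm (q₁ + q₂) p, add_left hwint, map_add, conj_symm p q₁, conj_symm p q₂,
    Complex.conj_conj, Complex.conj_conj]

lemma const_mul_right (hwint : IntervalIntegrable w volume (-π) π) (c : ℂ) (p q : Polynomial ℂ) :
    circleInner w p (C c * q) = (starRingEnd ℂ) c * circleInner w p q := by
  rw [conj_symm (C c * q) p, const_mul_left, map_mul, conj_symm p q, Complex.conj_conj]

lemma self_ofReal (w : ℝ → ℝ) (p : Polynomial ℂ) :
    circleInner w p p = (((1 / (2 * π)) * ∫ θ in (-π)..π,
      Complex.normSq (p.eval (Complex.exp (θ * Complex.I))) * w θ : ℝ) : ℂ) := by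
  unfold circleInner
  have h : (∫ θ in (-π)..π,
      p.eval (Complex.exp (θ * Complex.I)) *
        (starRingEnd ℂ) (p.eval (Complex.exp (θ * Complex.I))) * (w θ : ℂ)) =
      ∫ θ in (-π)..π,
        ((Complex.normSq (p.eval (Complex.exp (θ * Complex.I))) * w θ : ℝ) : ℂ) := by
    apply intervalIntegral.integral_congr
    intro θ _
    simp only
    rw [Complex.mul_conj]
    push_cast
    ring
  rw [h, intervalIntegral.integral_ofReal]
  push_cast
  ring

lemma shift (w : ℝ → ℝ) (Q : Polynomial ℂ) :
    circleInner w (X * Q) (X * Q) = circleInner w Q Q := by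
  unfold circleInner
  congr 1
  apply intervalIntegral.integral_congr
  intro θ _
  simp only
  have h1 : Complex.exp (θ * Complex.I) * (starRingEnd ℂ) (Complex.exp (θ * Complex.I)) = 1 := by
    rw [Complex.mul_conj]
    norm_cast
    rw [Complex.normSq_eq_norm_sq, Complex.norm_exp_ofReal_mul_I]
    norm_num
  simp only [eval_mul, eval_X, map_mul]
  calc Complex.exp (θ * Complex.I) * Q.eval (Complex.exp (θ * Complex.I)) *
      ((starRingEnd ℂ) (Complex.exp (θ * Complex.I)) *
        (starRingEnd ℂ) (Q.eval (Complex.exp (θ * Complex.I)))) * (w θ : ℂ)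
      = (Complex.exp (θ * Complex.I) * (starRingEnd ℂ) (Complex.exp (θ * Complex.I))) *
        (Q.eval (Complex.exp (θ * Complex.I)) *
          (starRingEnd ℂ) (Q.eval (Complex.exp (θ * Complex.I))) * (w θ : ℂ)) := by ring
    _ = _ := by rw [h1]; ring

lemma self_nonneg (w : ℝ → ℝ) (hw0 : ∀ θ, 0 ≤ w θ) (p : Polynomial ℂ) :
    0 ≤ (1 / (2 * π)) * ∫ θ in (-π)..π,
      Complex.normSq (p.eval (Complex.exp (θ * Complex.I))) * w θ := by
  apply mul_nonneg
  · positivity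
  · apply intervalIntegral.integral_nonneg (by linarith [Real.pi_pos])
    intro u _
    exact mul_nonneg (Complex.normSq_nonneg _) (hw0 u)

end CircleInnerAux

/-- All roots of a polynomial of degree `n` which is orthogonal (w.r.t. a
nonnegative, integrable, not-a.e.-zero weight on the unit circle) to all
polynomials of degree `< n`, and has nonzero norm, lie strictly inside the unit
circle. -/
theorem roots_of_orthogonal_polynomial_inside_unit_disc
    (w : ℝ → ℝ) (hw0 : ∀ θ, 0 ≤ w θ)
    (hwint : IntervalIntegrable w MeasureTheory.volume (-π) π)
    (hwne : ¬ (∀ᵐ θ ∂(MeasureTheory.volume.restrict (Set.Ioc (-π) π)), w θ = 0))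
    (n : ℕ) (Φ : Polynomial ℂ) (hdeg : Φ.degree = n)
    (horth : ∀ q : Polynomial ℂ, q.degree < (n : WithBot ℕ) → circleInner w Φ q = 0)
    (hnorm : circleInner w Φ Φ ≠ 0) :
    ∀ z₀ : ℂ, Φ.eval z₀ = 0 → ‖z₀‖ < 1 := by
  intro z₀ hz
  open CircleInnerAux in
  -- Φ ≠ 0
  have hΦne : Φ ≠ 0 := by
    intro h
    rw [h, degree_zero] at hdeg
    exact (by simp : (⊥ : WithBot ℕ) ≠ (n : WithBot ℕ)) hdeg
  -- factor out the root
  obtain ⟨Q, hQ⟩ := (dvd_iff_isRoot.mpr hz : (X - C z₀) ∣ Φ)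
  have hQne : Q ≠ 0 := by
    intro h; rw [h, mul_zero] at hQ; exact hΦne hQ
  -- degree of Q is < n
  have hdQ : Q.degree < (n : WithBot ℕ) := by
    rw [hQ, degree_mul, degree_X_sub_C, Polynomial.degree_eq_natDegree hQne] at hdeg
    rw [Polynomial.degree_eq_natDegree hQne]
    have h' : 1 + Q.natDegree = n := by exact_mod_cast hdeg
    exact_mod_cast (by omega : Q.natDegree < n)
  -- key decomposition
  have hsplit : X * Q = Φ + C z₀ * Q := by
    rw [hQ]; ring
  have horthQ : circleInner w Φ Q = 0 := horth Q hdQ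
  have hQΦ : circleInner w Q Φ = 0 := by
    rw [conj_symm, horthQ, map_zero]
  -- A = B + |z₀|² A
  have key : circleInner w Q Q =
      circleInner w Φ Φ + z₀ * (starRingEnd ℂ) z₀ * circleInner w Q Q := by
    have h1 := shift w Q
    rw [hsplit] at h1
    rw [add_left hwint, const_mul_left, add_right hwint, add_right hwint,
      const_mul_right hwint, const_mul_right hwint, horthQ, hQΦ] at h1
    linear_combination -h1
  -- pass to real parts
  have hA := self_ofReal w Q
  have hB := self_ofReal w Φ
  set a : ℝ := (1 / (2 * π)) * ∫ θ in (-π)..π,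
      Complex.normSq (Q.eval (Complex.exp (θ * Complex.I))) * w θ with ha_def
  set b : ℝ := (1 / (2 * π)) * ∫ θ in (-π)..π,
      Complex.normSq (Φ.eval (Complex.exp (θ * Complex.I))) * w θ with hb_def
  have ha0 : 0 ≤ a := self_nonneg w hw0 Q
  have hb0 : 0 ≤ b := self_nonneg w hw0 Φ
  have hbne : b ≠ 0 := by
    intro h; apply hnorm; rw [hB, h, Complex.ofReal_zero]
  have hbpos : 0 < b := lt_of_le_of_ne hb0 (Ne.symm hbne)
  rw [hA, hB, Complex.mul_conj] at key
  have keyR : a = b + Complex.normSq z₀ * a := by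
    exact_mod_cast key
  have hlt : Complex.normSq z₀ < 1 := by
    nlinarith
  have habs : (‖z₀‖) ^ 2 < 1 := by
    rw [Complex.sq_norm]; exact hlt
  nlinarith [norm_nonneg z₀]
end

section
/- Let P(z) = p_d z^d + … + p_0 with p_0, p_d ≠ 0, and let û(z) = |p_0|^{-2}|\hat P(z)|² be the weight associated with the reversed polynomial \hat P(z) = p_d + p_{d-1}z + … + p_0 z^d, while t(z) = |P(z)|². If {H_n} and {G_n} are the monically-normalized orthogonal polynomial systems for t and û respectively, then the roots of G_n are exactly the complex conjugates of the roots of H_n for every n. -/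
open Polynomial Real MeasureTheory Finset

lemma myintegral_conj (f : ℝ → ℂ) (a b : ℝ) :
    ∫ x in a..b, (starRingEnd ℂ) (f x) = (starRingEnd ℂ) (∫ x in a..b, f x) := by
  simp [intervalIntegral, ← integral_conj]

lemma eval_map_conj (q : Polynomial ℂ) (z : ℂ) :
    (q.map (starRingEnd ℂ)).eval z = (starRingEnd ℂ) (q.eval ((starRingEnd ℂ) z)) := by
  rw [eval_map]
  induction q using Polynomial.induction_on with
  | C c => simp
  | add p q hp hq => simp [hp, hq]
  | monomial n c h =>
      simp only [eval₂_mul, eval₂_C, eval₂_pow, eval₂_X, map_mul, map_pow, eval_mul, eval_C,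
        eval_pow, eval_X, Complex.conj_conj]

lemma cont_eval (q : Polynomial ℂ) : Continuous fun θ : ℝ => q.eval (Complex.exp (θ * Complex.I)) := by
  fun_prop

lemma integrand_integrable {w : ℝ → ℝ} (hw : Continuous w) (p q : Polynomial ℂ) :
    IntervalIntegrable (fun θ : ℝ => p.eval (Complex.exp (θ * Complex.I)) *
      (starRingEnd ℂ) (q.eval (Complex.exp (θ * Complex.I))) * (w θ : ℂ)) volume (-π) π := by
  apply Continuous.intervalIntegrable
  exact ((cont_eval p).mul ((Complex.continuous_conj).comp (cont_eval q))).mul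
    (Complex.continuous_ofReal.comp hw)

lemma circleInner_zero_left (w : ℝ → ℝ) (r : Polynomial ℂ) : circleInner w 0 r = 0 := by
  simp [circleInner]

lemma circleInner_sub_left {w : ℝ → ℝ} (hw : Continuous w) (p q r : Polynomial ℂ) :
    circleInner w (p - q) r = circleInner w p r - circleInner w q r := by
  unfold circleInner
  rw [← mul_sub, ← intervalIntegral.integral_sub (integrand_integrable hw p r)
    (integrand_integrable hw q r)]
  congr 1
  apply intervalIntegral.integral_congr
  intro θ _
  simp [eval_sub, sub_mul]

lemma circleInner_sub_right {w : ℝ → ℝ} (hw : Continuous w) (p q r : Polynomial ℂ) :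
    circleInner w p (q - r) = circleInner w p q - circleInner w p r := by
  unfold circleInner
  rw [← mul_sub, ← intervalIntegral.integral_sub (integrand_integrable hw p q)
    (integrand_integrable hw p r)]
  congr 1
  apply intervalIntegral.integral_congr
  intro θ _
  simp only [eval_sub, map_sub]
  ring

lemma circleInner_Cmul_left (w : ℝ → ℝ) (c : ℂ) (q r : Polynomial ℂ) :
    circleInner w (C c * q) r = c * circleInner w q r := by
  unfold circleInner
  rw [show (fun θ : ℝ => (C c * q).eval (Complex.exp (θ * Complex.I)) *
      (starRingEnd ℂ) (r.eval (Complex.exp (θ * Complex.I))) * (w θ : ℂ)) =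
      fun θ : ℝ => c * (q.eval (Complex.exp (θ * Complex.I)) *
      (starRingEnd ℂ) (r.eval (Complex.exp (θ * Complex.I))) * (w θ : ℂ)) from by
    funext θ; simp [eval_mul]; ring]
  rw [intervalIntegral.integral_const_mul]
  ring

lemma span_ortho {w : ℝ → ℝ} (hw : Continuous w) (H : ℕ → Polynomial ℂ)
    (hHmonic : ∀ n, (H n).Monic ∧ (H n).natDegree = n)
    (hHorth : ∀ m n : ℕ, m ≠ n → circleInner w (H m) (H n) = 0) :
    ∀ (m n : ℕ) (q : Polynomial ℂ), q.natDegree ≤ m → q.natDegree < n →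
      circleInner w q (H n) = 0 := by
  intro m
  induction m with
  | zero =>
      intro n q hq hqn
      have hH0 : H 0 = 1 := by
        have := (hHmonic 0).1
        rw [← Polynomial.Monic.natDegree_eq_zero this, (hHmonic 0).2]
      have : q = C (q.coeff 0) * H 0 := by
        rw [hH0, mul_one]; exact Polynomial.eq_C_of_natDegree_le_zero hq
      rw [this, circleInner_Cmul_left, hHorth 0 n (by omega), mul_zero]
  | succ m ih =>
      intro n q hq hqn
      by_cases hle : q.natDegree ≤ m
      · exact ih n q hle hqn
      · have hk : q.natDegree = m + 1 := by omega
        have hq0 : q ≠ 0 := by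
          intro h; rw [h] at hk; simp at hk
        set k := q.natDegree with hkdef
        have hHk := hHmonic k
        have hlc : (C q.leadingCoeff * H k).leadingCoeff = q.leadingCoeff := by
          rw [leadingCoeff_mul, leadingCoeff_C, (hHk.1).leadingCoeff, mul_one]
        have hdeg : (C q.leadingCoeff * H k).degree = q.degree := by
          rw [degree_mul, degree_C (leadingCoeff_ne_zero.mpr hq0), zero_add,
            Polynomial.degree_eq_natDegree (hHk.1.ne_zero),
            Polynomial.degree_eq_natDegree hq0, hHk.2]
        have hsub : (q - C q.leadingCoeff * H k).degree < q.degree :=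
          degree_sub_lt hdeg.symm hq0 hlc.symm
        have hsub' : (q - C q.leadingCoeff * H k).natDegree ≤ m := by
          rcases eq_or_ne (q - C q.leadingCoeff * H k) 0 with h0 | h0
          · rw [h0]; simp
          · have := Polynomial.natDegree_lt_natDegree h0 hsub
            omega
        have e1 : circleInner w (q - C q.leadingCoeff * H k) (H n) = 0 :=
          ih n _ hsub' (by omega)
        have e2 : circleInner w (C q.leadingCoeff * H k) (H n) = 0 := by
          rw [circleInner_Cmul_left, hHorth k n (by omega), mul_zero]
        have e3 := circleInner_sub_left hw q (C q.leadingCoeff * H k) (H n)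
        rw [e1, e2] at e3
        linear_combination -e3

lemma exp_injOn : Set.InjOn (fun θ : ℝ => Complex.exp (θ * Complex.I)) (Set.Ioc (-π) π) := by
  intro a ha b hb hab
  simp only at hab
  rw [Complex.exp_eq_exp_iff_exists_int] at hab
  obtain ⟨n, hn⟩ := hab
  have hr : (a : ℂ) = (b : ℂ) + n * (2 * π) := by
    have hI : ((a : ℂ) - (b : ℂ) - n * (2 * π)) * Complex.I = 0 := by
      rw [sub_mul, sub_mul, hn]; ring
    have := mul_eq_zero.mp hI
    rcases this with h | h
    · linear_combination h
    · exact absurd h Complex.I_ne_zero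
  have hr' : a = b + n * (2 * π) := by
    exact_mod_cast hr
  have h1 : a - b = n * (2 * π) := by linarith
  have h2 : |a - b| < 2 * π := by
    rw [abs_lt]
    constructor <;> [nlinarith [ha.1, ha.2, hb.1, hb.2, Real.pi_pos]; nlinarith [ha.1, ha.2, hb.1, hb.2, Real.pi_pos]]
  have hn0 : n = 0 := by
    by_contra hne
    have : (1 : ℝ) ≤ |(n : ℝ)| := by
      exact_mod_cast Int.one_le_abs (by exact_mod_cast hne)
    rw [h1, abs_mul, abs_of_pos (by positivity : (0:ℝ) < 2 * π)] at h2
    nlinarith [Real.pi_pos]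
  rw [hn0] at h1
  simp at h1
  linarith

lemma posdef {w : ℝ → ℝ} {P : Polynomial ℂ} (hP : P ≠ 0)
    (hw : ∀ θ : ℝ, w θ = Complex.normSq (P.eval (Complex.exp (θ * Complex.I))))
    (q : Polynomial ℂ) (hq : circleInner w q q = 0) : q = 0 := by
  by_contra hq0
  set R := q * P with hR
  have hR0 : R ≠ 0 := mul_ne_zero hq0 hP
  set g : ℝ → ℝ := fun θ => Complex.normSq (R.eval (Complex.exp (θ * Complex.I))) with hg
  have hgc : Continuous g := Complex.continuous_normSq.comp (cont_eval R)
  have hgnn : ∀ θ, 0 ≤ g θ := fun θ => Complex.normSq_nonneg _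
  have key : circleInner w q q = (1 / (2 * π) : ℂ) * ((∫ θ in (-π)..π, g θ : ℝ) : ℂ) := by
    unfold circleInner
    rw [← intervalIntegral.integral_ofReal]
    congr 1
    apply intervalIntegral.integral_congr
    intro θ _
    simp only [hg, hR, eval_mul, Complex.normSq_mul, hw θ]
    push_cast
    rw [Complex.mul_conj]
  have hI : (∫ θ in (-π)..π, g θ) = 0 := by
    rw [key] at hq
    have h2π : (1 / (2 * π) : ℂ) ≠ 0 := by
      simp [Real.pi_ne_zero]
    have := (mul_eq_zero.mp hq).resolve_left h2π
    exact_mod_cast this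
  -- convert to set integral over Ioc
  have hle : (-π) ≤ π := by linarith [Real.pi_pos]
  rw [intervalIntegral.integral_of_le hle] at hI
  have hint : IntegrableOn g (Set.Ioc (-π) π) volume := hgc.integrableOn_Ioc
  have hae := (integral_eq_zero_iff_of_nonneg (fun θ => hgnn θ) hint).mp hI
  -- hae : g =ᵐ[volume.restrict (Ioc -π π)] 0
  have hnull : volume ({θ ∈ Set.Ioc (-π) π | g θ ≠ 0}) = 0 := by
    have := (ae_restrict_iff' measurableSet_Ioc).mp hae
    rw [ae_iff] at this
    refine measure_mono_null ?_ this
    intro θ hθ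
    simp only [Set.mem_setOf_eq] at hθ ⊢
    tauto
  have hfin : ({θ ∈ Set.Ioc (-π) π | g θ = 0}).Finite := by
    apply Set.Finite.of_finite_image (f := fun θ : ℝ => Complex.exp (θ * Complex.I))
    · apply Set.Finite.subset (Polynomial.finite_setOf_isRoot hR0)
      rintro z ⟨θ, hθ, rfl⟩
      simp only [Set.mem_setOf_eq, Polynomial.IsRoot]
      exact Complex.normSq_eq_zero.mp hθ.2
    · exact exp_injOn.mono (fun θ hθ => hθ.1)
  have hsplit : Set.Ioc (-π) π ⊆ {θ ∈ Set.Ioc (-π) π | g θ ≠ 0} ∪ {θ ∈ Set.Ioc (-π) π | g θ = 0} := by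
    intro θ hθ
    by_cases h : g θ = 0
    · exact Or.inr ⟨hθ, h⟩
    · exact Or.inl ⟨hθ, h⟩
  have : volume (Set.Ioc (-π) π) = 0 := by
    refine measure_mono_null hsplit ?_
    exact measure_union_null hnull (hfin.measure_zero volume)
  rw [Real.volume_Ioc] at this
  have : (2 : ℝ) * π ≤ 0 := by
    by_contra hc
    push_neg at hc
    rw [ENNReal.ofReal_eq_zero] at this
    linarith
  nlinarith [Real.pi_pos]

lemma rev_eval (d : ℕ) (p : ℕ → ℂ) (z : ℂ) (hz : z ≠ 0) :
    (∑ k ∈ Finset.range (d + 1), C (p (d - k)) * X ^ k).eval z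
      = z ^ d * (∑ k ∈ Finset.range (d + 1), C (p k) * X ^ k).eval z⁻¹ := by
  rw [eval_finset_sum, eval_finset_sum, Finset.mul_sum]
  simp only [eval_mul, eval_C, eval_pow, eval_X]
  have step1 : ∑ i ∈ Finset.range (d + 1), p (d - i) * z ^ i
      = ∑ i ∈ Finset.range (d + 1), p i * z ^ (d - i) := by
    rw [← Finset.sum_range_reflect (fun j => p j * z ^ (d - j)) (d + 1)]
    apply Finset.sum_congr rfl
    intro i hi
    rw [Finset.mem_range] at hi
    have hi' : i ≤ d := Nat.lt_succ_iff.mp hi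
    simp only [Nat.succ_sub_one]
    rw [Nat.sub_sub_self hi']
  rw [step1]
  apply Finset.sum_congr rfl
  intro i hi
  rw [Finset.mem_range] at hi
  have hi' : i ≤ d := Nat.lt_succ_iff.mp hi
  rw [inv_pow, mul_comm (z ^ d), mul_assoc]
  congr 1
  field_simp
  rw [← pow_add]
  congr 1
  omega

lemma normSq_exp (θ : ℝ) : Complex.normSq (Complex.exp (θ * Complex.I)) = 1 := by
  rw [Complex.normSq_eq_norm_sq, Complex.norm_exp_ofReal_mul_I]; norm_num

lemma exp_neg_eq (θ : ℝ) : Complex.exp ((-θ : ℝ) * Complex.I) = (Complex.exp (θ * Complex.I))⁻¹ := by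
  push_cast
  rw [neg_mul, Complex.exp_neg]

lemma exp_conj_eq (θ : ℝ) : (starRingEnd ℂ) (Complex.exp (θ * Complex.I)) = Complex.exp ((-θ : ℝ) * Complex.I) := by
  rw [← Complex.exp_conj]
  congr 1
  simp only [map_mul, Complex.conj_I, Complex.conj_ofReal]
  push_cast
  ring

lemma lemA (d : ℕ) (p : ℕ → ℂ) (t u : ℝ → ℝ)
    (ht : ∀ θ : ℝ, t θ = Complex.normSq
      ((∑ k ∈ Finset.range (d + 1), C (p k) * X ^ k).eval (Complex.exp (θ * Complex.I))))
    (hu : ∀ θ : ℝ, u θ = (Complex.normSq (p 0))⁻¹ * Complex.normSq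
      ((∑ k ∈ Finset.range (d + 1), C (p (d - k)) * X ^ k).eval (Complex.exp (θ * Complex.I))))
    (q r : Polynomial ℂ) :
    circleInner u q r = ((Complex.normSq (p 0) : ℂ))⁻¹ *
      (starRingEnd ℂ) (circleInner t (q.map (starRingEnd ℂ)) (r.map (starRingEnd ℂ))) := by
  have hut : ∀ θ : ℝ, u θ = (Complex.normSq (p 0))⁻¹ * t (-θ) := by
    intro θ
    rw [hu θ, ht (-θ)]
    congr 1
    have hz : Complex.exp (θ * Complex.I) ≠ 0 := Complex.exp_ne_zero _
    rw [rev_eval d p _ hz, map_mul, map_pow, normSq_exp, one_pow, one_mul, exp_neg_eq]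
  set G : ℝ → ℂ := fun s => (starRingEnd ℂ)
    ((q.map (starRingEnd ℂ)).eval (Complex.exp (s * Complex.I)) *
      (starRingEnd ℂ) ((r.map (starRingEnd ℂ)).eval (Complex.exp (s * Complex.I))) * (t s : ℂ))
    with hG
  calc circleInner u q r
      = (1/(2*π) : ℂ) * ∫ θ in (-π)..π, ((Complex.normSq (p 0) : ℂ))⁻¹ * G (-θ) := by
        unfold circleInner
        congr 1
        apply intervalIntegral.integral_congr
        intro θ _
        simp only [hG]
        rw [hut θ]
        simp only [map_mul, Complex.conj_conj, Complex.conj_ofReal,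
          eval_map_conj, exp_conj_eq, neg_neg]
        push_cast
        ring
    _ = ((Complex.normSq (p 0) : ℂ))⁻¹ * ((1/(2*π) : ℂ) * ∫ s in (-π)..π, G s) := by
        rw [intervalIntegral.integral_const_mul, intervalIntegral.integral_comp_neg G, neg_neg]
        ring
    _ = ((Complex.normSq (p 0) : ℂ))⁻¹ *
      (starRingEnd ℂ) (circleInner t (q.map (starRingEnd ℂ)) (r.map (starRingEnd ℂ))) := by
        congr 1
        unfold circleInner
        rw [map_mul, hG, myintegral_conj]
        congr 1
        simp [map_div₀, map_mul, Complex.conj_ofReal, map_ofNat]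

/-- For the weight `t(z) = |P(z)|²` and the weight `û(z) = |p₀|⁻²|P̂(z)|²` of the
reversed polynomial `P̂`, the roots of the monic orthogonal polynomials `G_n`
(for `û`) are exactly the complex conjugates of the roots of the monic
orthogonal polynomials `H_n` (for `t`). -/
theorem reversed_weight_orthogonal_polynomials_roots_conjugate
    (d : ℕ) (p : ℕ → ℂ) (hp0 : p 0 ≠ 0) (hpd : p d ≠ 0) (hpz : ∀ k, d < k → p k = 0)
    (t u : ℝ → ℝ)
    (ht : ∀ θ : ℝ, t θ = Complex.normSq
      ((∑ k ∈ Finset.range (d + 1), C (p k) * X ^ k).eval (Complex.exp (θ * Complex.I))))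
    (hu : ∀ θ : ℝ, u θ = (Complex.normSq (p 0))⁻¹ * Complex.normSq
      ((∑ k ∈ Finset.range (d + 1), C (p (d - k)) * X ^ k).eval (Complex.exp (θ * Complex.I))))
    (H G : ℕ → Polynomial ℂ)
    (hHmonic : ∀ n, (H n).Monic ∧ (H n).natDegree = n)
    (hGmonic : ∀ n, (G n).Monic ∧ (G n).natDegree = n)
    (hHorth : ∀ m n : ℕ, m ≠ n → circleInner t (H m) (H n) = 0)
    (hGorth : ∀ m n : ℕ, m ≠ n → circleInner u (G m) (G n) = 0) :
    ∀ (n : ℕ) (z : ℂ), (G n).eval z = 0 ↔ (H n).eval ((starRingEnd ℂ) z) = 0 := by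
  set P : Polynomial ℂ := ∑ k ∈ Finset.range (d + 1), C (p k) * X ^ k with hP
  have hPne : P ≠ 0 := by
    intro h
    have : P.coeff d = p d := by
      rw [hP, Polynomial.finset_sum_coeff]
      simp [Polynomial.coeff_C_mul, Polynomial.coeff_X_pow, Finset.sum_ite_eq']
    rw [h] at this
    simp at this
    exact hpd this.symm
  have htc : Continuous t := by
    have : t = fun θ : ℝ => Complex.normSq (P.eval (Complex.exp (θ * Complex.I))) := funext ht
    rw [this]
    exact Complex.continuous_normSq.comp (cont_eval P)
  set K : ℕ → Polynomial ℂ := fun n => (G n).map (starRingEnd ℂ) with hK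
  have hKmonic : ∀ n, (K n).Monic ∧ (K n).natDegree = n := by
    intro n
    exact ⟨(hGmonic n).1.map _, by rw [hK]; rw [Monic.natDegree_map (hGmonic n).1]; exact (hGmonic n).2⟩
  have hc : ((Complex.normSq (p 0) : ℂ)) ≠ 0 := by
    simp [Complex.normSq_eq_zero, hp0]
  have hKorth : ∀ m n : ℕ, m ≠ n → circleInner t (K m) (K n) = 0 := by
    intro m n hmn
    have := lemA d p t u ht hu (G m) (G n)
    rw [hGorth m n hmn] at this
    have h2 : (starRingEnd ℂ) (circleInner t (K m) (K n)) = 0 := by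
      rcases mul_eq_zero.mp this.symm with h | h
      · exact absurd h (inv_ne_zero hc)
      · exact h
    simpa using h2
  have hKH : ∀ n, K n = H n := by
    intro n
    set D := H n - K n with hD
    have hDdeg : D = 0 ∨ D.natDegree < n := by
      rcases eq_or_ne D 0 with h0 | h0
      · exact Or.inl h0
      · right
        have hdeg : (H n).degree = (K n).degree := by
          rw [Polynomial.degree_eq_natDegree (hHmonic n).1.ne_zero,
            Polynomial.degree_eq_natDegree (hKmonic n).1.ne_zero,
            (hHmonic n).2, (hKmonic n).2]
        have := degree_sub_lt hdeg (hHmonic n).1.ne_zero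
          (by rw [(hHmonic n).1.leadingCoeff, (hKmonic n).1.leadingCoeff])
        rw [← hD] at this
        have h4 := Polynomial.natDegree_lt_natDegree h0 this
        have h5 := (hHmonic n).2
        omega
    rcases hDdeg with h0 | hlt
    · rw [hD] at h0
      exact (sub_eq_zero.mp h0).symm
    · have e1 : circleInner t D (H n) = 0 :=
        span_ortho htc H hHmonic hHorth D.natDegree n D le_rfl hlt
      have e2 : circleInner t D (K n) = 0 :=
        span_ortho htc K hKmonic hKorth D.natDegree n D le_rfl hlt
      have e3 : circleInner t D D = 0 := by
        rw [hD, circleInner_sub_right htc, ← hD, e1, e2, sub_zero]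
      have := posdef hPne ht D e3
      rw [hD] at this
      exact (sub_eq_zero.mp this).symm
  intro n z
  have hGn : H n = (G n).map (starRingEnd ℂ) := (hKH n).symm
  rw [hGn, eval_map_conj]
  simp
end
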